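/- If a hypertree Θ on [n] carries partial conjugations x_{i,D} and x_{j,E} (as outer automorphism classes of W_n), then x_{i,D} and x_{j,E} commute in Out^0(W_n). -/

import Mathlib

/-- A hypergraph on `[n]`, identified with its set of hyperedges:
every hyperedge has at least two vertices. -/
def IsHypergraph {n : ℕ} (E : Finset (Finset (Fin n))) : Prop :=
  ∀ e ∈ E, 2 ≤ e.card

/-- Data of a walk: a length `len`, a sequence of `len + 1` vertices and
`len` hyperedges. -/
structure WalkData (n : ℕ) where
  len : ℕ
  verts : Fin (len + 1) → Fin n
  eds : Fin len → Finset (Fin n)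

/-- `s` is a simple walk from `v` to `w` in the hypergraph `E`: an alternating
sequence of pairwise distinct vertices and pairwise distinct hyperedges
`v = v₀, e₁, v₁, …, e_p, v_p = w` with `{vₖ, vₖ₊₁} ⊆ eₖ₊₁`. -/
def IsSimpleWalk {n : ℕ} (E : Finset (Finset (Fin n))) (v w : Fin n)
    (s : WalkData n) : Prop :=
  s.verts 0 = v ∧ s.verts (Fin.last s.len) = w ∧
  Function.Injective s.verts ∧ Function.Injective s.eds ∧
  ∀ k : Fin s.len, s.eds k ∈ E ∧ s.verts k.castSucc ∈ s.eds k ∧ s.verts k.succ ∈ s.eds k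

/-- A hypertree: a hypergraph in which any two vertices are joined by a unique
simple walk. -/
def IsHypertree {n : ℕ} (E : Finset (Finset (Fin n))) : Prop :=
  IsHypergraph E ∧ ∀ v w : Fin n, ∃! s : WalkData n, IsSimpleWalk E v w s

/-- The hypergraph `E` carries the partial conjugation `x_{i,D}`: every simple walk
from a vertex of `D` to a vertex of `[n] ∖ (D ∪ {i})` visits `i`. -/
def Carries {n : ℕ} (E : Finset (Finset (Fin n))) (i : Fin n)
    (D : Finset (Fin n)) : Prop :=
  ∀ d ∈ D, ∀ j : Fin n, j ∉ D → j ≠ i →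
    ∀ s : WalkData n, IsSimpleWalk E d j s → ∃ k, s.verts k = i

/-- Defining relations of `Wₙ`: each generator squares to the identity. -/
def wrels (n : ℕ) : Set (FreeGroup (Fin n)) :=
  {r | ∃ i : Fin n, r = FreeGroup.of i * FreeGroup.of i}

/-- The universal right-angled Coxeter group `Wₙ`. -/
abbrev W (n : ℕ) := PresentedGroup (wrels n)

/-- The generator `aᵢ` of `Wₙ`. -/
def gen {n : ℕ} (i : Fin n) : W n := PresentedGroup.of i

/-- `φ` is the partial conjugation with acting letter `aᵢ` and domain `D`. -/
def IsPC {n : ℕ} (φ : W n ≃* W n) (i : Fin n) (D : Finset (Fin n)) : Prop :=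
  (∀ j ∈ D, φ (gen j) = gen i * gen j * gen i) ∧ (∀ j ∉ D, φ (gen j) = gen j)

/-- If a hypertree `Θ` carries the partial conjugations `x_{i,D}` and `x_{j,F}`, then
these commute in `Out⁰(Wₙ)`, i.e. their commutator (as automorphisms of `Wₙ`) is an
inner automorphism. -/
def WalkData.revw {n : ℕ} (s : WalkData n) : WalkData n :=
  ⟨s.len, fun k => s.verts k.rev, fun k => s.eds k.rev⟩

lemma isSimpleWalk_revw {n : ℕ} {E : Finset (Finset (Fin n))} {v w : Fin n}
    {s : WalkData n} (h : IsSimpleWalk E v w s) : IsSimpleWalk E w v s.revw := by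
  obtain ⟨h0, hl, hv, he, hk⟩ := h
  refine ⟨?_, ?_, ?_, ?_, ?_⟩
  · show s.verts (Fin.rev 0) = w
    rwa [Fin.rev_zero]
  · show s.verts (Fin.last s.len).rev = v
    rwa [Fin.rev_last]
  · intro a b hab
    exact Fin.rev_injective (hv hab)
  · intro a b hab
    exact Fin.rev_injective (he hab)
  · intro k
    obtain ⟨he1, he2, he3⟩ := hk k.rev
    refine ⟨he1, ?_, ?_⟩
    · show s.verts k.castSucc.rev ∈ s.eds k.rev
      rw [Fin.rev_castSucc]; exact he3
    · show s.verts k.succ.rev ∈ s.eds k.rev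
      rw [Fin.rev_succ]; exact he2

lemma rev_visits {n : ℕ} {E : Finset (Finset (Fin n))} {a b i : Fin n}
    (h : ∀ s, IsSimpleWalk E a b s → ∃ k, s.verts k = i) :
    ∀ s, IsSimpleWalk E b a s → ∃ k, s.verts k = i := by
  intro s hs
  obtain ⟨k, hk⟩ := h s.revw (isSimpleWalk_revw hs)
  exact ⟨k.rev, hk⟩

lemma isSimpleWalk_trunc {n : ℕ} {E : Finset (Finset (Fin n))} {v w : Fin n}
    {s : WalkData n} (hs : IsSimpleWalk E v w s) (m : ℕ) (hm : m ≤ s.len) :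
    IsSimpleWalk E v (s.verts ⟨m, by omega⟩)
      ⟨m, fun k => s.verts ⟨k.val, by omega⟩, fun k => s.eds ⟨k.val, by omega⟩⟩ := by
  refine ⟨?_, ?_, ?_, ?_, ?_⟩
  · show s.verts ⟨((0 : Fin (m + 1))).val, _⟩ = v
    have h0 : (⟨((0 : Fin (m + 1))).val, by omega⟩ : Fin (s.len + 1)) = 0 := by
      ext; simp
    rw [h0]; exact hs.1
  · show s.verts ⟨(Fin.last m).val, _⟩ = s.verts ⟨m, _⟩
    rfl
  · intro a b hab
    have h2 := hs.2.2.1 hab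
    exact Fin.ext (by simpa using h2)
  · intro a b hab
    have h2 := hs.2.2.2.1 hab
    exact Fin.ext (by simpa using h2)
  · intro k
    have hkm : (k : ℕ) < m := k.isLt
    obtain ⟨he1, he2, he3⟩ := hs.2.2.2.2 ⟨k.val, by omega⟩
    refine ⟨he1, ?_, ?_⟩
    · show s.verts ⟨k.val, by omega⟩ ∈ _
      have h0 : (⟨k.val, by omega⟩ : Fin (s.len + 1)) =
          (⟨k.val, by omega⟩ : Fin s.len).castSucc := by
        ext; simp
      rw [h0]; exact he2
    · show s.verts ⟨k.val + 1, by omega⟩ ∈ _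
      have h0 : (⟨k.val + 1, by omega⟩ : Fin (s.len + 1)) =
          (⟨k.val, by omega⟩ : Fin s.len).succ := by
        ext; simp
      rw [h0]; exact he3

lemma cut {n : ℕ} {E : Finset (Finset (Fin n))} (hE : IsHypertree E) {v i j : Fin n}
    (hij : j ≠ i)
    (H1 : ∀ s, IsSimpleWalk E v i s → ∃ k, s.verts k = j)
    (H2 : ∀ s, IsSimpleWalk E v j s → ∃ k, s.verts k = i) : False := by
  obtain ⟨s, hs, -⟩ := hE.2 v i
  obtain ⟨p, hp⟩ := H1 s hs
  have hple : p.val ≤ s.len := Nat.lt_succ_iff.mp p.isLt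
  have hplt : p.val < s.len := by
    rcases lt_or_eq_of_le hple with h | h
    · exact h
    · exfalso
      have hpl : p = Fin.last s.len := Fin.ext h
      rw [hpl, hs.2.1] at hp
      exact hij hp.symm
  have ht := isSimpleWalk_trunc hs p.val hple
  rw [show (⟨p.val, by omega⟩ : Fin (s.len + 1)) = p from Fin.ext rfl, hp] at ht
  obtain ⟨k, hk⟩ := H2 _ ht
  have hkm : (k : ℕ) < p.val + 1 := k.isLt
  have hkv : s.verts ⟨k.val, by omega⟩ = s.verts (Fin.last s.len) := by
    rw [hs.2.1]; exact hk
  have h3 := hs.2.2.1 hkv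
  have h4 : k.val = s.len := by
    have := congrArg Fin.val h3
    simpa using this
  have := k.isLt
  omega

lemma gen_sq {n : ℕ} (i : Fin n) : gen i * gen i = 1 := by
  have h : (FreeGroup.of i * FreeGroup.of i) ∈ Subgroup.normalClosure (wrels n) :=
    Subgroup.subset_normalClosure ⟨i, rfl⟩
  exact (QuotientGroup.eq_one_iff (FreeGroup.of i * FreeGroup.of i)).mpr h

lemma conj_of_gen {n : ℕ} (φ ψ : W n ≃* W n) (w : W n)
    (h : ∀ k : Fin n, φ (ψ (gen k)) = w * ψ (φ (gen k)) * w⁻¹) :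
    ∀ x : W n, φ (ψ x) = w * ψ (φ x) * w⁻¹ := by
  have heq : (φ.toMonoidHom.comp ψ.toMonoidHom) =
      ((MulAut.conj w).toMonoidHom.comp (ψ.toMonoidHom.comp φ.toMonoidHom)) := by
    apply PresentedGroup.ext
    intro x
    simpa [MulAut.conj, gen] using h x
  intro x
  have := DFunLike.congr_fun heq x
  simpa [MulAut.conj] using this

theorem stmt14 (n : ℕ) (E : Finset (Finset (Fin n))) (hE : IsHypertree E)
    (i j : Fin n) (D F : Finset (Fin n)) (hi : i ∉ D) (hj : j ∉ F)
    (φ ψ : W n ≃* W n) (hφ : IsPC φ i D) (hψ : IsPC ψ j F)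
    (hcD : Carries E i D) (hcF : Carries E j F) :
    ∃ w : W n, ∀ x : W n, φ (ψ x) = w * ψ (φ x) * w⁻¹ := by
  obtain ⟨hφ1, hφ2⟩ := hφ
  obtain ⟨hψ1, hψ2⟩ := hψ
  have hss : gen i * gen i = 1 := gen_sq i
  have hts : gen j * gen j = 1 := gen_sq j
  have hs2 : ∀ x : W n, gen i * (gen i * x) = x := fun x => by
    rw [← mul_assoc, hss, one_mul]
  have ht2 : ∀ x : W n, gen j * (gen j * x) = x := fun x => by
    rw [← mul_assoc, hts, one_mul]
  have hsinv : (gen i)⁻¹ = gen i := inv_eq_of_mul_eq_one_right hss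
  have htinv : (gen j)⁻¹ = gen j := inv_eq_of_mul_eq_one_right hts
  by_cases hij : i = j
  · subst hij
    refine ⟨1, conj_of_gen φ ψ 1 ?_⟩
    intro k
    by_cases hkD : k ∈ D <;> by_cases hkF : k ∈ F
    · simp only [hψ1 k hkF, map_mul, hφ2 i hi, hφ1 k hkD, hψ2 i hj,
        one_mul, inv_one, mul_one, mul_assoc, hs2]
    · simp only [hψ2 k hkF, hφ1 k hkD, map_mul, hψ2 i hj,
        one_mul, inv_one, mul_one, mul_assoc, hs2]
    · simp only [hψ1 k hkF, map_mul, hφ2 i hi, hφ2 k hkD,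
        one_mul, inv_one, mul_one, mul_assoc, hs2]
    · simp only [hψ2 k hkF, hφ2 k hkD, one_mul, inv_one, mul_one]
  · have hji : j ≠ i := fun h => hij h.symm
    by_cases hjD : j ∈ D <;> by_cases hiF : i ∈ F
    · -- j ∈ D, i ∈ F : w = s t s t
      have hDU : ∀ k, k ∉ D → k ∈ F := by
        intro k hkD
        by_contra hkF
        have hki : k ≠ i := fun h => hkF (h.symm ▸ hiF)
        have hkj : k ≠ j := fun h => hkD (h.symm ▸ hjD)
        exact cut hE hji (rev_visits (hcF i hiF k hkF hkj))
          (rev_visits (hcD j hjD k hkD hki))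
      refine ⟨gen i * gen j * gen i * gen j, conj_of_gen φ ψ _ ?_⟩
      intro k
      by_cases hkD : k ∈ D <;> by_cases hkF : k ∈ F
      · simp only [hψ1 k hkF, map_mul, hφ1 j hjD, hφ1 k hkD, hψ1 i hiF,
          mul_inv_rev, hsinv, htinv, one_mul, mul_one, mul_assoc, hs2, ht2, hss, hts]
      · simp only [hψ2 k hkF, hφ1 k hkD, map_mul, hψ1 i hiF,
          mul_inv_rev, hsinv, htinv, one_mul, mul_one, mul_assoc, hs2, ht2, hss, hts]
      · simp only [hψ1 k hkF, map_mul, hφ1 j hjD, hφ2 k hkD,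
          mul_inv_rev, hsinv, htinv, one_mul, mul_one, mul_assoc, hs2, ht2, hss, hts]
      · exact absurd (hDU k hkD) hkF
    · -- j ∈ D, i ∉ F : F ⊆ D, w = 1
      have hFD : ∀ k, k ∈ F → k ∈ D := by
        intro f hf
        by_contra hfD
        have hfi : f ≠ i := fun h => hiF (h ▸ hf)
        exact cut hE hji (hcF f hf i hiF hij) (rev_visits (hcD j hjD f hfD hfi))
      refine ⟨1, conj_of_gen φ ψ 1 ?_⟩
      intro k
      by_cases hkD : k ∈ D <;> by_cases hkF : k ∈ F
      · simp only [hψ1 k hkF, map_mul, hφ1 j hjD, hφ1 k hkD, hψ2 i hiF,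
          one_mul, inv_one, mul_one, mul_assoc, hs2, ht2, hss, hts]
      · simp only [hψ2 k hkF, hφ1 k hkD, map_mul, hψ2 i hiF,
          one_mul, inv_one, mul_one, mul_assoc, hs2, ht2]
      · exact absurd (hFD k hkF) hkD
      · simp only [hψ2 k hkF, hφ2 k hkD, one_mul, inv_one, mul_one]
    · -- j ∉ D, i ∈ F : D ⊆ F, w = 1
      have hDFsub : ∀ k, k ∈ D → k ∈ F := by
        intro d hd
        by_contra hdF
        have hdj : d ≠ j := fun h => hjD (h ▸ hd)
        exact cut hE hji (rev_visits (hcF i hiF d hdF hdj)) (hcD d hd j hjD hji)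
      refine ⟨1, conj_of_gen φ ψ 1 ?_⟩
      intro k
      by_cases hkD : k ∈ D <;> by_cases hkF : k ∈ F
      · simp only [hψ1 k hkF, map_mul, hφ2 j hjD, hφ1 k hkD, hψ1 i hiF,
          one_mul, inv_one, mul_one, mul_assoc, hs2, ht2, hss, hts]
      · exact absurd (hDFsub k hkD) hkF
      · simp only [hψ1 k hkF, map_mul, hφ2 j hjD, hφ2 k hkD,
          one_mul, inv_one, mul_one, mul_assoc]
      · simp only [hψ2 k hkF, hφ2 k hkD, one_mul, inv_one, mul_one]
    · -- j ∉ D, i ∉ F : D ∩ F = ∅, w = 1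
      have hDF : ∀ k, k ∈ D → k ∈ F → False := by
        intro k hkD hkF
        exact cut hE hji (hcF k hkF i hiF hij) (hcD k hkD j hjD hji)
      refine ⟨1, conj_of_gen φ ψ 1 ?_⟩
      intro k
      by_cases hkD : k ∈ D <;> by_cases hkF : k ∈ F
      · exact absurd hkF (hDF k hkD)
      · simp only [hψ2 k hkF, hφ1 k hkD, map_mul, hψ2 i hiF,
          one_mul, inv_one, mul_one]
      · simp only [hψ1 k hkF, map_mul, hφ2 j hjD, hφ2 k hkD,
          one_mul, inv_one, mul_one]
      · simp only [hψ2 k hkF, hφ2 k hkD, one_mul, inv_one, mul_one]
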